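/- For 1 ≤ p < ∞ and s > 0, the maps h_p^(s) and h_p^(1/s) on ℓ^p are mutually inverse: h_p^(s) ∘ h_p^(1/s) = id and h_p^(1/s) ∘ h_p^(s) = id. -/

import Mathlib

open scoped ENNReal
open Filter

noncomputable def lpTail (p : ℝ≥0∞) (x : ℕ → ℂ) (n : ℕ) : ℝ :=
  ∑' k : ℕ, ‖x (n + k)‖ ^ p.toReal

noncomputable def hMap (p : ℝ≥0∞) (s : ℝ) (x : ℕ → ℂ) (n : ℕ) : ℂ :=
  if x n = 0 then 0
  else (x n / ‖x n‖) *
    ((((lpTail p x n) ^ s - (lpTail p x (n + 1)) ^ s) ^ (1 / p.toReal) : ℝ) : ℂ)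

section aux

variable {p : ℝ≥0∞} {x : ℕ → ℂ}

lemma lpTail_eq (hx : Summable fun k => ‖x k‖ ^ p.toReal) (n : ℕ) :
    lpTail p x n = ‖x n‖ ^ p.toReal + lpTail p x (n + 1) := by
  have hs : Summable fun k => ‖x (n + k)‖ ^ p.toReal :=
    ((summable_nat_add_iff n).mpr hx).congr (fun k => by rw [add_comm k n])
  have := hs.tsum_eq_zero_add
  simp only [add_zero] at this
  rw [lpTail, this, lpTail]
  congr 1
  exact tsum_congr fun k => by ring_nf

lemma lpTail_nonneg (n : ℕ) : 0 ≤ lpTail p x n :=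
  tsum_nonneg fun k => Real.rpow_nonneg (norm_nonneg _) _

lemma lpTail_tendsto : Tendsto (lpTail p x) atTop (nhds 0) := by
  have := tendsto_sum_nat_add (fun k => ‖x k‖ ^ p.toReal)
  exact this.congr fun n => tsum_congr fun k => by rw [add_comm]

end aux

lemma hMap_key (p : ℝ≥0∞) [Fact (1 ≤ p)] (hp : p ≠ ∞) (t : ℝ) (ht : 0 < t)
    (x : ℕ → ℂ) (hx : Memℓp x p) : hMap p (1 / t) (hMap p t x) = x := by
  have hp1 : (1 : ℝ≥0∞) ≤ p := Fact.out
  have hr : 0 < p.toReal := ENNReal.toReal_pos (zero_lt_one.trans_le hp1).ne' hp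
  set r := p.toReal with hrdef
  have hf : Summable fun k => ‖x k‖ ^ r := hx.summable hr
  set T := lpTail p x with hT
  have hTrec : ∀ n, T n = ‖x n‖ ^ r + T (n + 1) := lpTail_eq hf
  have hTnn : ∀ n, 0 ≤ T n := fun n => lpTail_nonneg n
  have hTmono : ∀ n, T (n + 1) ≤ T n := fun n => by
    rw [hTrec n]; exact le_add_of_nonneg_left (Real.rpow_nonneg (norm_nonneg _) _)
  have hT0 : Tendsto T atTop (nhds 0) := lpTail_tendsto
  set y := hMap p t x with hy
  -- norm formula
  have hnorm : ∀ n, ‖y n‖ = (T n ^ t - T (n + 1) ^ t) ^ (1 / r) := by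
    intro n
    by_cases h : x n = 0
    · have : T n = T (n + 1) := by rw [hTrec n, h]; simp [Real.zero_rpow hr.ne']
      simp [hy, hMap, h, this, Real.zero_rpow (inv_ne_zero hr.ne')]
    · have hlt : T (n + 1) ^ t ≤ T n ^ t :=
        Real.rpow_le_rpow (hTnn _) (hTmono n) ht.le
      show ‖hMap p t x n‖ = _
      rw [hMap, if_neg h,norm_mul, norm_div, Complex.norm_real, Real.norm_eq_abs, abs_of_nonneg (norm_nonneg _),
        div_self (norm_ne_zero_iff.mpr h), one_mul, Complex.norm_real, Real.norm_eq_abs,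
        abs_of_nonneg (Real.rpow_nonneg (by linarith) _)]
  -- lpTail of y
  have hG : ∀ n, lpTail p y n = T n ^ t := by
    intro n
    have hsum : HasSum (fun k => ‖y (n + k)‖ ^ r) (T n ^ t) := by
      have hterm : ∀ k, ‖y (n + k)‖ ^ r = T (n + k) ^ t - T (n + k + 1) ^ t := by
        intro k
        have hle : T (n + k + 1) ^ t ≤ T (n + k) ^ t :=
          Real.rpow_le_rpow (hTnn _) (hTmono _) ht.le
        rw [hnorm, one_div, Real.rpow_inv_rpow (by linarith) hr.ne']
      have hG0 : Tendsto (fun N => T (n + N) ^ t) atTop (nhds 0) := by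
        have h1 : Tendsto (fun N => T (n + N)) atTop (nhds 0) :=
          hT0.comp (tendsto_atTop_mono (fun N => Nat.le_add_left N n) tendsto_id)
        have h2 : ContinuousAt (fun u : ℝ => u ^ t) 0 :=
          Real.continuousAt_rpow_const 0 t (Or.inr ht.le)
        have := h2.tendsto.comp h1
        simpa [Function.comp_def, Real.zero_rpow ht.ne'] using this
      rw [hasSum_iff_tendsto_nat_of_nonneg
        (fun k => Real.rpow_nonneg (norm_nonneg _) _)]
      have hps : ∀ N, ∑ k ∈ Finset.range N, ‖y (n + k)‖ ^ r = T n ^ t - T (n + N) ^ t := by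
        intro N
        have := Finset.sum_range_sub' (f := fun k => T (n + k) ^ t) N
        simp only [add_zero, ← add_assoc] at this
        rw [← this]
        exact Finset.sum_congr rfl fun k _ => hterm k
      simp only [hps]
      simpa using tendsto_const_nhds.sub hG0
    exact hsum.tsum_eq
  -- final computation
  funext n
  by_cases h : x n = 0
  · have hy0 : y n = 0 := by simp [hy, hMap, h]
    simp [hMap, hy0, h]
  · have hxr : 0 < ‖x n‖ ^ r := Real.rpow_pos_of_pos (norm_pos_iff.mpr h) _
    have hTlt : T (n + 1) < T n := by rw [hTrec n]; linarith
    have hc : 0 < (T n ^ t - T (n + 1) ^ t) ^ (1 / r) := by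
      apply Real.rpow_pos_of_pos
      have := Real.rpow_lt_rpow (hTnn (n + 1)) hTlt ht
      linarith
    have hyn : y n ≠ 0 := by
      intro h0
      have h1 : ‖y n‖ = 0 := by rw [h0, norm_zero]
      rw [hnorm n] at h1
      exact hc.ne' h1
    rw [hMap, if_neg hyn]
    have hynorm : (‖y n‖ : ℂ) ≠ 0 := by
      simpa using norm_ne_zero_iff.mpr hyn
    have hyval : y n = (x n / ‖x n‖) * (((T n ^ t - T (n + 1) ^ t) ^ (1 / r) : ℝ) : ℂ) := by
      rw [hy]; rw [hMap, if_neg h]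
    have hquot : (y n : ℂ) / (‖y n‖ : ℝ) = x n / ‖x n‖ := by
      rw [hnorm n, hyval]
      rw [mul_div_assoc, div_self (by exact_mod_cast hc.ne'), mul_one]
    rw [hquot]
    have hL : ∀ m, lpTail p y m ^ (1 / t) = T m := by
      intro m
      rw [hG m, one_div, Real.rpow_rpow_inv (hTnn m) ht.ne']
    rw [hL, hL]
    have hTsub : T n - T (n + 1) = ‖x n‖ ^ r := by rw [hTrec n]; ring
    rw [hTsub, one_div, Real.rpow_rpow_inv (norm_nonneg _) hr.ne']
    exact div_mul_cancel₀ _ (by simpa using norm_ne_zero_iff.mpr h)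

theorem hMap_inverse (p : ℝ≥0∞) [Fact (1 ≤ p)] (hp : p ≠ ∞) (s : ℝ) (hs : 0 < s) :
    (∀ x : lp (fun _ : ℕ => ℂ) p, hMap p s (hMap p (1 / s) x) = (x : ℕ → ℂ)) ∧
    (∀ x : lp (fun _ : ℕ => ℂ) p, hMap p (1 / s) (hMap p s x) = (x : ℕ → ℂ)) := by
  constructor
  · intro x
    have := hMap_key p hp (1 / s) (by positivity) x (lp.memℓp x)
    rwa [one_div_one_div] at this
  · intro x
    exact hMap_key p hp s hs x (lp.memℓp x)
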